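/- For a row stretching A → A^S with A nonsingular, if A^S z = Ȳ y (where Ȳ is a right inverse of Y) and A x = y, then z = X x where X := (A^S)⁻¹ Ȳ A; in particular X̄ z = x with X̄ := [I 0]Pᵗ. -/

import Mathlib

open Matrix

/-- The permutation matrix associated with a bijection `e` between (finite) index types. -/
noncomputable def permMat {κ γ : Type*} [DecidableEq γ] (e : κ ≃ γ) : Matrix κ γ ℝ :=
  Matrix.of fun k c => if e k = c then 1 else 0

lemma permMat_eq_toMatrix {κ γ : Type*} [DecidableEq γ] (e : κ ≃ γ) :
    permMat e = (e.toPEquiv).toMatrix := by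
  ext i j
  simp [permMat, PEquiv.toMatrix, Equiv.toPEquiv_apply, eq_comm]

lemma permMat_mul_transpose {κ : Type*} [DecidableEq κ] [Fintype κ] (e : κ ≃ κ) :
    permMat e * (permMat e)ᵀ = 1 := by
  rw [permMat_eq_toMatrix, ← PEquiv.toMatrix_symm, ← Equiv.toPEquiv_symm,
    ← PEquiv.toMatrix_trans, ← Equiv.toPEquiv_trans]
  simp [Equiv.toPEquiv_refl]

lemma transpose_mul_permMat {κ : Type*} [DecidableEq κ] [Fintype κ] (e : κ ≃ κ) :
    (permMat e)ᵀ * permMat e = 1 := by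
  rw [permMat_eq_toMatrix, ← PEquiv.toMatrix_symm, ← Equiv.toPEquiv_symm,
    ← PEquiv.toMatrix_trans, ← Equiv.toPEquiv_trans]
  simp [Equiv.toPEquiv_refl]

/-- Corollary to Theorem 2 (row case): for a row stretching `A → A^S = [B G]Pᵗ` with `A`
nonsingular, if `A^S z = Ȳ y` (with `Ȳ` a right inverse of `Y`) and `A x = y`, then
`z = X x` with `X := (A^S)⁻¹ Ȳ A`, and in particular `X̄ z = x` with `X̄ := [I 0]Pᵗ`. -/
theorem row_stretching_solution {n k : ℕ}
    (A : Matrix (Fin n) (Fin n) ℝ)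
    (B : Matrix (Fin n ⊕ Fin k) (Fin n) ℝ)
    (G : Matrix (Fin n ⊕ Fin k) (Fin k) ℝ)
    (e : (Fin n ⊕ Fin k) ≃ (Fin n ⊕ Fin k))
    (Y : Matrix (Fin n) (Fin n ⊕ Fin k) ℝ)
    (Ybar : Matrix (Fin n ⊕ Fin k) (Fin n) ℝ)
    (hYB : Y * B = A) (hYG : Y * G = 0)
    (hG : LinearIndependent ℝ Gᵀ)
    (hY : LinearIndependent ℝ Y)
    (hA : IsUnit A.det)
    (hYbar : Y * Ybar = 1)
    (x y : Fin n → ℝ) (z : (Fin n ⊕ Fin k) → ℝ)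
    (hx : A.mulVec x = y)
    (hz : (fromCols B G * (permMat e)ᵀ).mulVec z = Ybar.mulVec y) :
    z = ((fromCols B G * (permMat e)ᵀ)⁻¹ * Ybar * A).mulVec x ∧
      ((fromCols (1 : Matrix (Fin n) (Fin n) ℝ) (0 : Matrix (Fin n) (Fin k) ℝ) *
        (permMat e)ᵀ)).mulVec z = x := by
  set M := fromCols B G with hM
  set P := permMat e with hP
  -- A has injective mulVec
  have hAinj : ∀ c : Fin n → ℝ, A.mulVec c = 0 → c = 0 := by
    intro c hc
    have := Matrix.mulVec_injective_iff_isUnit.mpr ((Matrix.isUnit_iff_isUnit_det A).mpr hA)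
    have h0 : A.mulVec 0 = 0 := by simp
    exact this (hc.trans h0.symm)
  -- columns of G are independent: G *ᵥ c = 0 → c = 0
  have hGinj : ∀ c : Fin k → ℝ, G.mulVec c = 0 → c = 0 := by
    intro c hc
    have hsum : ∑ j, c j • Gᵀ j = 0 := by
      funext i
      have : (∑ j, c j • Gᵀ j) i = ∑ j, G i j * c j := by
        simp [Finset.sum_apply, transpose_apply, mul_comm]
      rw [this]
      have := congrFun hc i
      simpa [Matrix.mulVec, dotProduct] using this
    have := Fintype.linearIndependent_iff.mp hG c hsum
    funext j; exact this j
  -- M is invertible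
  have hMunit : IsUnit M.det := by
    rw [← Matrix.isUnit_iff_isUnit_det, ← Matrix.mulVec_injective_iff_isUnit]
    intro v w hvw
    have hsub : M.mulVec (v - w) = 0 := by
      rw [Matrix.mulVec_sub, hvw, sub_self]
    have hv : v - w = 0 := by
      have helim : M.mulVec (Sum.elim ((v - w) ∘ Sum.inl) ((v - w) ∘ Sum.inr)) = 0 := by
        rwa [Sum.elim_comp_inl_inr]
      rw [hM, fromCols_mulVec_sumElim] at helim
      have hY0 : Y.mulVec (B.mulVec ((v - w) ∘ Sum.inl) + G.mulVec ((v - w) ∘ Sum.inr)) = 0 := by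
        rw [helim, Matrix.mulVec_zero]
      rw [Matrix.mulVec_add, Matrix.mulVec_mulVec, Matrix.mulVec_mulVec, hYB, hYG,
        Matrix.zero_mulVec, add_zero] at hY0
      have h1 : (v - w) ∘ Sum.inl = 0 := hAinj _ hY0
      have h2 : G.mulVec ((v - w) ∘ Sum.inr) = 0 := by
        rw [h1, Matrix.mulVec_zero, zero_add] at helim
        exact helim
      have h2' : (v - w) ∘ Sum.inr = 0 := hGinj _ h2
      funext i
      cases i with
      | inl i => exact congrFun h1 i
      | inr i => exact congrFun h2' i
    exact sub_eq_zero.mp hv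
  have hPunit : IsUnit (Pᵀ).det := Matrix.isUnit_det_of_right_inverse (transpose_mul_permMat e)
  have hASunit : IsUnit (M * Pᵀ).det := by
    rw [Matrix.det_mul]; exact hMunit.mul hPunit
  -- inverse formula
  have hinv : (M * Pᵀ)⁻¹ = P * M⁻¹ := by
    apply Matrix.inv_eq_right_inv
    rw [Matrix.mul_assoc, ← Matrix.mul_assoc Pᵀ P M⁻¹, transpose_mul_permMat e, one_mul,
      Matrix.mul_nonsing_inv M hMunit]
  -- part 1
  have hz2 : z = ((M * Pᵀ)⁻¹ * Ybar * A).mulVec x := by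
    calc z = (1 : Matrix (Fin n ⊕ Fin k) (Fin n ⊕ Fin k) ℝ).mulVec z := (Matrix.one_mulVec z).symm
    _ = ((M * Pᵀ)⁻¹ * (M * Pᵀ)).mulVec z := by rw [Matrix.nonsing_inv_mul _ hASunit]
    _ = ((M * Pᵀ)⁻¹).mulVec ((M * Pᵀ).mulVec z) := by rw [Matrix.mulVec_mulVec]
    _ = ((M * Pᵀ)⁻¹).mulVec (Ybar.mulVec (A.mulVec x)) := by rw [hz, hx]
    _ = ((M * Pᵀ)⁻¹ * Ybar * A).mulVec x := by
        rw [Matrix.mulVec_mulVec, Matrix.mulVec_mulVec]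
  refine ⟨hz2, ?_⟩
  -- part 2
  set W := M⁻¹ * Ybar * A with hWdef
  have hMW : M * W = Ybar * A := by
    rw [hWdef, ← Matrix.mul_assoc, ← Matrix.mul_assoc, Matrix.mul_nonsing_inv M hMunit, Matrix.one_mul]
  have hW1 : W.toRows₁ = 1 := by
    have hYMW : Y * (M * W) = Y * Ybar * A := by rw [hMW, ← Matrix.mul_assoc]
    rw [hYbar, Matrix.one_mul] at hYMW
    have hYM : Y * M = fromCols A 0 := by
      rw [hM, mul_fromCols, hYB, hYG]
    have hWr : W = fromRows W.toRows₁ W.toRows₂ := (fromRows_toRows W).symm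
    rw [← Matrix.mul_assoc, hYM, hWr, fromCols_mul_fromRows, Matrix.zero_mul, add_zero]
      at hYMW
    calc W.toRows₁ = 1 * W.toRows₁ := (one_mul _).symm
    _ = (A⁻¹ * A) * W.toRows₁ := by rw [Matrix.nonsing_inv_mul A hA]
    _ = A⁻¹ * (A * W.toRows₁) := by rw [Matrix.mul_assoc]
    _ = A⁻¹ * A := by rw [hYMW]
    _ = 1 := Matrix.nonsing_inv_mul A hA
  have hkey : fromCols (1 : Matrix (Fin n) (Fin n) ℝ) (0 : Matrix (Fin n) (Fin k) ℝ) * Pᵀ *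
      ((M * Pᵀ)⁻¹ * Ybar * A) = 1 := by
    rw [hinv]
    have : fromCols (1 : Matrix (Fin n) (Fin n) ℝ) (0 : Matrix (Fin n) (Fin k) ℝ) * Pᵀ *
        (P * M⁻¹ * Ybar * A) =
        fromCols (1 : Matrix (Fin n) (Fin n) ℝ) (0 : Matrix (Fin n) (Fin k) ℝ) *
          (Pᵀ * P) * W := by
      rw [hWdef]
      simp only [Matrix.mul_assoc]
    rw [this, transpose_mul_permMat e, Matrix.mul_one]
    have hWr : W = fromRows W.toRows₁ W.toRows₂ := (fromRows_toRows W).symm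
    rw [hWr, fromCols_mul_fromRows, hW1, one_mul, Matrix.zero_mul, add_zero]
  rw [hz2, Matrix.mulVec_mulVec, hkey, Matrix.one_mulVec]
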